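/- arXiv:0902.2754 — 2 statements merged into one kernel-verified Lean document; each statement's English description precedes it below -/
import Mathlib

section
/- Let x : [0,1] → ℝⁿ be an H¹ curve and let g0 be a (constant) positive definite inner product on ℝⁿ, δ ∈ ℝⁿ, β > 0, with g̃0 = g0/β. Define T₊(x) = ∫₀¹ ( g̃0(δ, ẋ) + sqrt( g̃0(δ,ẋ)² + g̃0(ẋ,ẋ) ) ) ds and T̃₊(x) = ∫₀¹ g̃0(δ,ẋ) ds + sqrt( (∫₀¹ (g0(ẋ,ẋ) + g̃0(δ,ẋ) g0(δ,ẋ)) ds) · ∫₀¹ (1/β) ds ). Then T₊(x) ≤ T̃₊(x). -/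
open MeasureTheory

lemma jensen_sqrt_aux (u : ℝ → ℝ) (hu0 : ∀ s, 0 ≤ u s)
    (hui : IntervalIntegrable u volume 0 1)
    (hsi : IntervalIntegrable (fun s => Real.sqrt (u s)) volume 0 1) :
    (∫ s in (0:ℝ)..1, Real.sqrt (u s)) ≤ Real.sqrt (∫ s in (0:ℝ)..1, u s) := by
  have h01 : (0:ℝ) ≤ 1 := by norm_num
  haveI : IsProbabilityMeasure (volume.restrict (Set.Ioc (0:ℝ) 1)) :=
    ⟨by simp [Measure.restrict_apply]⟩
  rw [intervalIntegral.integral_of_le h01, intervalIntegral.integral_of_le h01]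
  have hconc : ConcaveOn ℝ (Set.Ici 0) (Real.sqrt : ℝ → ℝ) :=
    Real.strictConcaveOn_sqrt.concaveOn
  have := hconc.le_map_integral (f := u) (μ := volume.restrict (Set.Ioc (0:ℝ) 1))
    Real.continuous_sqrt.continuousOn isClosed_Ici
    (Filter.Eventually.of_forall fun s => hu0 s)
    ((intervalIntegrable_iff_integrableOn_Ioc_of_le h01).mp hui)
    ((intervalIntegrable_iff_integrableOn_Ioc_of_le h01).mp hsi)
  simpa using this

/-- the inequality `T₊(x) ≤ T̃₊(x)` (formula (stimo) of the paper) for an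
`H¹` curve `x : [0,1] → ℝⁿ` with constant coefficients `g0, δ, β` and `g̃0 = g0/β`. -/
theorem Tplus_le_Ttildeplus {n : ℕ}
    (g0 : EuclideanSpace ℝ (Fin n) →ₗ[ℝ] EuclideanSpace ℝ (Fin n) →ₗ[ℝ] ℝ)
    (hsymm : ∀ x y, g0 x y = g0 y x)
    (hpos : ∀ y, y ≠ 0 → 0 < g0 y y)
    (δ : EuclideanSpace ℝ (Fin n)) (β : ℝ) (hβ : 0 < β)
    (x x' : ℝ → EuclideanSpace ℝ (Fin n))
    (hx : ∀ s ∈ Set.Icc (0 : ℝ) 1, HasDerivAt x (x' s) s)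
    (hint1 : IntervalIntegrable (fun s => g0 δ (x' s) / β) volume 0 1)
    (hint2 : IntervalIntegrable
      (fun s => Real.sqrt ((g0 δ (x' s) / β) ^ 2 + g0 (x' s) (x' s) / β)) volume 0 1)
    (hint3 : IntervalIntegrable
      (fun s => g0 (x' s) (x' s) + (g0 δ (x' s) / β) * g0 δ (x' s)) volume 0 1) :
    (∫ s in (0:ℝ)..1,
        (g0 δ (x' s) / β + Real.sqrt ((g0 δ (x' s) / β) ^ 2 + g0 (x' s) (x' s) / β)))
      ≤ (∫ s in (0:ℝ)..1, g0 δ (x' s) / β)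
        + Real.sqrt
            ((∫ s in (0:ℝ)..1, (g0 (x' s) (x' s) + (g0 δ (x' s) / β) * g0 δ (x' s)))
              * (1 / β)) := by
  set u : ℝ → ℝ := fun s => (g0 δ (x' s) / β) ^ 2 + g0 (x' s) (x' s) / β with hu
  have hg0nn : ∀ y, 0 ≤ g0 y y := by
    intro y
    rcases eq_or_ne y 0 with h | h
    · simp [h]
    · exact (hpos y h).le
  have hu0 : ∀ s, 0 ≤ u s :=
    fun s => add_nonneg (sq_nonneg _) (div_nonneg (hg0nn _) hβ.le)
  have hHeq : ∀ s, g0 (x' s) (x' s) + (g0 δ (x' s) / β) * g0 δ (x' s) = β * u s := by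
    intro s
    field_simp [hu]
    simp only [hu]
    field_simp <;> ring
  have hui : IntervalIntegrable u volume 0 1 := by
    have := hint3.div_const β
    refine this.congr ?_
    intro s _
    beta_reduce
    rw [hHeq s]
    field_simp
  -- split the integral
  rw [intervalIntegral.integral_add hint1 hint2]
  refine add_le_add_right ?_ _
  have hkey : (∫ s in (0:ℝ)..1, Real.sqrt (u s)) ≤ Real.sqrt (∫ s in (0:ℝ)..1, u s) :=
    jensen_sqrt_aux u hu0 hui hint2
  have hInt : (∫ s in (0:ℝ)..1, (g0 (x' s) (x' s) + (g0 δ (x' s) / β) * g0 δ (x' s)))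
      * (1 / β) = ∫ s in (0:ℝ)..1, u s := by
    rw [intervalIntegral.integral_congr (g := fun s => β * u s) (fun s _ => hHeq s),
      intervalIntegral.integral_const_mul]
    field_simp
  rw [hInt]
  exact hkey
end

section
/- Under the same constant-coefficient setting, define T₋(x) = ∫₀¹ ( g̃0(δ,ẋ) − sqrt( g̃0(δ,ẋ)² + g̃0(ẋ,ẋ) ) ) ds and T̃₋(x) = ∫₀¹ g̃0(δ,ẋ) ds − sqrt( (∫₀¹ (g0(ẋ,ẋ) + g̃0(δ,ẋ) g0(δ,ẋ)) ds) · (1/β) ). Then T̃₋(x) ≤ T₋(x). -/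
open MeasureTheory

lemma my_sqrt_integral_le {u : ℝ → ℝ} (hu : IntervalIntegrable u volume 0 1)
    (hsu : IntervalIntegrable (fun s => Real.sqrt (u s)) volume 0 1)
    (hnn : ∀ s, 0 ≤ u s) :
    (∫ s in (0:ℝ)..1, Real.sqrt (u s)) ≤ Real.sqrt (∫ s in (0:ℝ)..1, u s) := by
  set I := ∫ s in (0:ℝ)..1, u s with hIdef
  have hI : 0 ≤ I := intervalIntegral.integral_nonneg (by norm_num) (fun s _ => hnn s)
  have key : ∀ ε : ℝ, 0 < ε →
      (∫ s in (0:ℝ)..1, Real.sqrt (u s)) ≤ (I + ε) / (2 * Real.sqrt ε) := by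
    intro ε hε
    have hsε : 0 < Real.sqrt ε := Real.sqrt_pos.mpr hε
    have hbound : ∀ s ∈ Set.Icc (0:ℝ) 1,
        Real.sqrt (u s) ≤ (u s + ε) / (2 * Real.sqrt ε) := by
      intro s _
      rw [le_div_iff₀ (by positivity)]
      nlinarith [sq_nonneg (Real.sqrt (u s) - Real.sqrt ε), Real.sq_sqrt (hnn s),
        Real.sq_sqrt hε.le, Real.sqrt_nonneg (u s)]
    have hint : IntervalIntegrable (fun s => (u s + ε) / (2 * Real.sqrt ε)) volume 0 1 := by
      simpa [div_eq_mul_inv] using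
        ((hu.add (intervalIntegrable_const (c := ε))).mul_const (2 * Real.sqrt ε)⁻¹)
    calc (∫ s in (0:ℝ)..1, Real.sqrt (u s))
        ≤ ∫ s in (0:ℝ)..1, (u s + ε) / (2 * Real.sqrt ε) :=
          intervalIntegral.integral_mono_on (by norm_num) hsu hint hbound
      _ = (I + ε) / (2 * Real.sqrt ε) := by
          rw [show (fun s => (u s + ε) / (2 * Real.sqrt ε)) =
              (fun s => (u s + ε) * (2 * Real.sqrt ε)⁻¹) from by
            funext s; rw [div_eq_mul_inv]]
          rw [intervalIntegral.integral_mul_const,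
            intervalIntegral.integral_add hu (intervalIntegrable_const (c := ε))]
          simp [div_eq_mul_inv, hIdef]
  rcases eq_or_lt_of_le hI with h0 | hpos
  · rw [← h0, Real.sqrt_zero]
    have : ∀ η : ℝ, 0 < η → (∫ s in (0:ℝ)..1, Real.sqrt (u s)) ≤ 0 + η := by
      intro η hη
      have := key (η ^ 2) (by positivity)
      rw [← h0, Real.sqrt_sq hη.le] at this
      calc (∫ s in (0:ℝ)..1, Real.sqrt (u s)) ≤ (0 + η ^ 2) / (2 * η) := this
        _ ≤ 0 + η := by rw [zero_add, zero_add, div_le_iff₀ (by positivity)]; nlinarith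
    exact le_of_forall_pos_le_add this
  · have := key I hpos
    calc (∫ s in (0:ℝ)..1, Real.sqrt (u s)) ≤ (I + I) / (2 * Real.sqrt I) := this
      _ = I / Real.sqrt I := by ring_nf
      _ = Real.sqrt I := Real.div_sqrt

/-- the inequality `T̃₋(x) ≤ T₋(x)` (second half of formula (stimo) of the
paper) for an `H¹` curve `x : [0,1] → ℝⁿ` with constant coefficients `g0, δ, β` and
`g̃0 = g0/β`. -/
theorem Ttildeminus_le_Tminus {n : ℕ}
    (g0 : EuclideanSpace ℝ (Fin n) →ₗ[ℝ] EuclideanSpace ℝ (Fin n) →ₗ[ℝ] ℝ)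
    (hsymm : ∀ x y, g0 x y = g0 y x)
    (hpos : ∀ y, y ≠ 0 → 0 < g0 y y)
    (δ : EuclideanSpace ℝ (Fin n)) (β : ℝ) (hβ : 0 < β)
    (x x' : ℝ → EuclideanSpace ℝ (Fin n))
    (hx : ∀ s ∈ Set.Icc (0 : ℝ) 1, HasDerivAt x (x' s) s)
    (hint1 : IntervalIntegrable (fun s => g0 δ (x' s) / β) volume 0 1)
    (hint2 : IntervalIntegrable
      (fun s => Real.sqrt ((g0 δ (x' s) / β) ^ 2 + g0 (x' s) (x' s) / β)) volume 0 1)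
    (hint3 : IntervalIntegrable
      (fun s => g0 (x' s) (x' s) + (g0 δ (x' s) / β) * g0 δ (x' s)) volume 0 1) :
    (∫ s in (0:ℝ)..1, g0 δ (x' s) / β)
      - Real.sqrt
          ((∫ s in (0:ℝ)..1, (g0 (x' s) (x' s) + (g0 δ (x' s) / β) * g0 δ (x' s)))
            * (1 / β))
      ≤ ∫ s in (0:ℝ)..1,
          (g0 δ (x' s) / β - Real.sqrt ((g0 δ (x' s) / β) ^ 2 + g0 (x' s) (x' s) / β)) := by
  have hg0nn : ∀ s, 0 ≤ g0 (x' s) (x' s) := by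
    intro s
    by_cases h : x' s = 0
    · simp [h]
    · exact (hpos _ h).le
  set u : ℝ → ℝ := fun s => (g0 δ (x' s) / β) ^ 2 + g0 (x' s) (x' s) / β with hu_def
  have hunn : ∀ s, 0 ≤ u s := by
    intro s
    have := hg0nn s
    positivity
  have heq : ∀ s, (g0 (x' s) (x' s) + (g0 δ (x' s) / β) * g0 δ (x' s)) * (1 / β) = u s := by
    intro s
    simp only [hu_def]
    field_simp
    ring
  have hu_int : IntervalIntegrable u volume 0 1 := by
    have h := hint3.mul_const (1 / β)
    rwa [show (fun s => (g0 (x' s) (x' s) + (g0 δ (x' s) / β) * g0 δ (x' s)) * (1 / β)) = u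
      from funext heq] at h
  have harg : (∫ s in (0:ℝ)..1, (g0 (x' s) (x' s) + (g0 δ (x' s) / β) * g0 δ (x' s)))
      * (1 / β) = ∫ s in (0:ℝ)..1, u s := by
    rw [← intervalIntegral.integral_mul_const]
    exact intervalIntegral.integral_congr fun s _ => heq s
  rw [harg, intervalIntegral.integral_sub hint1 hint2, sub_le_sub_iff_left]
  exact my_sqrt_integral_le hu_int hint2 hunn
end
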